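/- arXiv:1909.09717 — 3 statements merged into one kernel-verified Lean document; each statement's English description precedes it below -/
import Mathlib

section
/- Let A be a normed division algebra. Then for all a, b ∈ A one has conj(a*b) = conj(b) * conj(a). -/
open scoped RealInnerProductSpace

/-- A normed division algebra: a real inner product space with an `ℝ`-bilinear
multiplication (not necessarily associative or commutative), a two-sided
multiplicative identity `one ≠ 0`, satisfying `‖a*b‖ = ‖a‖ * ‖b‖`. -/
structure NormedDivisionAlgebra (A : Type*) [NormedAddCommGroup A] [InnerProductSpace ℝ A] where
  mul : A →ₗ[ℝ] A →ₗ[ℝ] A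
  one : A
  one_ne_zero : one ≠ 0
  one_mul : ∀ a : A, mul one a = a
  mul_one : ∀ a : A, mul a one = a
  norm_mul : ∀ a b : A, ‖mul a b‖ = ‖a‖ * ‖b‖

namespace NormedDivisionAlgebra

variable {A : Type*} [NormedAddCommGroup A] [InnerProductSpace ℝ A]

/-- `Re a`: the orthogonal projection of `a` onto the real part `Re A = ℝ · 1`. -/
noncomputable def re (D : NormedDivisionAlgebra A) (a : A) : A :=
  (⟪a, D.one⟫ / ‖D.one‖ ^ 2) • D.one

/-- `Im a`: the orthogonal projection of `a` onto the imaginary part `Im A = (ℝ · 1)ᗮ`. -/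
noncomputable def im (D : NormedDivisionAlgebra A) (a : A) : A := a - D.re a

/-- The conjugate `conj a = Re a - Im a`. -/
noncomputable def conj (D : NormedDivisionAlgebra A) (a : A) : A := D.re a - D.im a

/-- The real part `Re A = ℝ · 1` as a submodule. -/
def ReSub (D : NormedDivisionAlgebra A) : Submodule ℝ A := Submodule.span ℝ {D.one}

/-- The imaginary part `Im A = (ℝ · 1)ᗮ` as a submodule. -/
noncomputable def ImSub (D : NormedDivisionAlgebra A) : Submodule ℝ A := (Submodule.span ℝ {D.one})ᗮ

/-- The commutator `[a, b] = a*b - b*a`. -/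
def comm (D : NormedDivisionAlgebra A) (a b : A) : A := D.mul a b - D.mul b a

/-- The associator `[a, b, c] = (a*b)*c - a*(b*c)`. -/
def assoc (D : NormedDivisionAlgebra A) (a b c : A) : A :=
  D.mul (D.mul a b) c - D.mul a (D.mul b c)

/-- The cross product `a × b = Im (a*b)` (intended for `a, b ∈ Im A`). -/
noncomputable def cross (D : NormedDivisionAlgebra A) (a b : A) : A := D.im (D.mul a b)

end NormedDivisionAlgebra

section Aux

variable {A : Type*} [NormedAddCommGroup A] [InnerProductSpace ℝ A]

lemma nda_norm_one (D : NormedDivisionAlgebra A) : ‖D.one‖ = 1 := by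
  have h := D.norm_mul D.one D.one
  rw [D.mul_one] at h
  have h1 : ‖D.one‖ ≠ 0 := norm_ne_zero_iff.mpr D.one_ne_zero
  have h2 : ‖D.one‖ * (‖D.one‖ - 1) = 0 := by linarith [h.symm]
  rcases mul_eq_zero.mp h2 with h3 | h3
  · exact absurd h3 h1
  · linarith

lemma nda_inner_mul (D : NormedDivisionAlgebra A) (a b c : A) :
    ⟪D.mul a b, D.mul a c⟫ = ‖a‖ ^ 2 * ⟪b, c⟫ := by
  have h : ∀ x y : A, ⟪x, y⟫ = (‖x + y‖ ^ 2 - ‖x‖ ^ 2 - ‖y‖ ^ 2) / 2 := by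
    intro x y
    rw [norm_add_sq_real]; ring
  rw [h, h, show D.mul a b + D.mul a c = D.mul a (b + c) from (map_add _ _ _).symm,
    D.norm_mul, D.norm_mul, D.norm_mul]
  ring

lemma nda_exchange (D : NormedDivisionAlgebra A) (a b c d : A) :
    ⟪D.mul a b, D.mul c d⟫ + ⟪D.mul c b, D.mul a d⟫ = 2 * ⟪a, c⟫ * ⟪b, d⟫ := by
  have h := nda_inner_mul D (a + c) b d
  have hm : D.mul (a + c) = D.mul a + D.mul c := map_add _ _ _
  rw [hm] at h
  simp only [LinearMap.add_apply, inner_add_left, inner_add_right] at h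
  rw [norm_add_sq_real] at h
  have h1 := nda_inner_mul D a b d
  have h2 := nda_inner_mul D c b d
  nlinarith [h, h1, h2]

end Aux

theorem nda_conj_mul {A : Type*} [NormedAddCommGroup A] [InnerProductSpace ℝ A]
    (D : NormedDivisionAlgebra A) (a b : A) :
    D.conj (D.mul a b) = D.mul (D.conj b) (D.conj a) := by
  have he : ‖D.one‖ = 1 := nda_norm_one D
  have hconj : ∀ x : A, D.conj x = (2 * ⟪x, D.one⟫) • D.one - x := by
    intro x
    simp only [NormedDivisionAlgebra.conj, NormedDivisionAlgebra.im,
      NormedDivisionAlgebra.re, he]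
    module
  apply ext_inner_right ℝ
  intro c
  -- specializations of exchange
  have H1 := nda_exchange D a b D.one D.one
  have H2 := nda_exchange D a b c D.one
  have H3 := nda_exchange D c b D.one a
  have H4 := nda_exchange D b a c D.one
  simp only [D.one_mul, D.mul_one] at H1 H2 H3 H4
  rw [hconj, hconj, hconj]
  simp only [map_sub, map_smul, LinearMap.sub_apply, LinearMap.smul_apply,
    inner_sub_left, inner_smul_left, inner_sub_right, inner_smul_right,
    D.one_mul, D.mul_one, RCLike.ofReal_real_eq_id, id, starRingEnd_apply, star_trivial]
  have s1 := real_inner_comm (D.mul c b) a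
  have s2 := real_inner_comm (D.mul c a) b
  have s3 := real_inner_comm a b
  have s4 := real_inner_comm c D.one
  linear_combination 2 * ⟪D.one, c⟫ * H1 - H2 + H3 - H4 + 2 * ⟪b, a⟫ * s4.symm - s2
end

section
/- Let A be a normed division algebra. Then for all a, c ∈ A one has the cancellation identities (a*c)*conj(c) = ‖c‖² • a, (a*conj(c))*c = ‖c‖² • a, a*(conj(a)*c) = ‖a‖² • c, and conj(a)*(a*c) = ‖a‖² • c. -/
open scoped RealInnerProductSpace

section Aux

open NormedDivisionAlgebra

variable {A : Type*} [NormedAddCommGroup A] [InnerProductSpace ℝ A]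
  (D : NormedDivisionAlgebra A)

lemma nda_norm_one_s7 : ‖D.one‖ = 1 := by
  have h := D.norm_mul D.one D.one
  rw [D.mul_one] at h
  have h1 : ‖D.one‖ ≠ 0 := norm_ne_zero_iff.mpr D.one_ne_zero
  have : ‖D.one‖ * 1 = ‖D.one‖ * ‖D.one‖ := by linarith
  exact (mul_left_cancel₀ h1 this).symm

lemma nda_conj_eq (c : A) : D.conj c = (2 * ⟪c, D.one⟫) • D.one - c := by
  unfold NormedDivisionAlgebra.conj NormedDivisionAlgebra.im NormedDivisionAlgebra.re
  rw [nda_norm_one_s7]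
  module

lemma nda_inner_mul_right (a b c : A) :
    ⟪D.mul a c, D.mul b c⟫ = ⟪a, b⟫ * ‖c‖ ^ 2 := by
  have ha := D.norm_mul a c
  have hb := D.norm_mul b c
  have hab : D.mul (a + b) c = D.mul a c + D.mul b c := by rw [map_add]; rfl
  have h2 : ‖a‖ ^ 2 * ‖c‖ ^ 2 + 2 * ⟪D.mul a c, D.mul b c⟫ + ‖b‖ ^ 2 * ‖c‖ ^ 2
      = ‖a‖ ^ 2 * ‖c‖ ^ 2 + 2 * (⟪a, b⟫ * ‖c‖ ^ 2) + ‖b‖ ^ 2 * ‖c‖ ^ 2 := by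
    calc ‖a‖ ^ 2 * ‖c‖ ^ 2 + 2 * ⟪D.mul a c, D.mul b c⟫ + ‖b‖ ^ 2 * ‖c‖ ^ 2
        = ‖D.mul a c‖ ^ 2 + 2 * ⟪D.mul a c, D.mul b c⟫ + ‖D.mul b c‖ ^ 2 := by
          rw [ha, hb]; ring
      _ = ‖D.mul a c + D.mul b c‖ ^ 2 := (norm_add_sq_real _ _).symm
      _ = ‖D.mul (a + b) c‖ ^ 2 := by rw [hab]
      _ = (‖a + b‖ * ‖c‖) ^ 2 := by rw [D.norm_mul]
      _ = ‖a + b‖ ^ 2 * ‖c‖ ^ 2 := by ring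
      _ = (‖a‖ ^ 2 + 2 * ⟪a, b⟫ + ‖b‖ ^ 2) * ‖c‖ ^ 2 := by rw [norm_add_sq_real]
      _ = ‖a‖ ^ 2 * ‖c‖ ^ 2 + 2 * (⟪a, b⟫ * ‖c‖ ^ 2) + ‖b‖ ^ 2 * ‖c‖ ^ 2 := by ring
  linarith

lemma nda_inner_mul_left (a b c : A) :
    ⟪D.mul c a, D.mul c b⟫ = ‖c‖ ^ 2 * ⟪a, b⟫ := by
  have ha := D.norm_mul c a
  have hb := D.norm_mul c b
  have hab : D.mul c (a + b) = D.mul c a + D.mul c b := map_add _ _ _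
  have h2 : ‖c‖ ^ 2 * ‖a‖ ^ 2 + 2 * ⟪D.mul c a, D.mul c b⟫ + ‖c‖ ^ 2 * ‖b‖ ^ 2
      = ‖c‖ ^ 2 * ‖a‖ ^ 2 + 2 * (‖c‖ ^ 2 * ⟪a, b⟫) + ‖c‖ ^ 2 * ‖b‖ ^ 2 := by
    calc ‖c‖ ^ 2 * ‖a‖ ^ 2 + 2 * ⟪D.mul c a, D.mul c b⟫ + ‖c‖ ^ 2 * ‖b‖ ^ 2
        = ‖D.mul c a‖ ^ 2 + 2 * ⟪D.mul c a, D.mul c b⟫ + ‖D.mul c b‖ ^ 2 := by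
          rw [ha, hb]; ring
      _ = ‖D.mul c a + D.mul c b‖ ^ 2 := (norm_add_sq_real _ _).symm
      _ = ‖D.mul c (a + b)‖ ^ 2 := by rw [hab]
      _ = (‖c‖ * ‖a + b‖) ^ 2 := by rw [D.norm_mul]
      _ = ‖c‖ ^ 2 * ‖a + b‖ ^ 2 := by ring
      _ = ‖c‖ ^ 2 * (‖a‖ ^ 2 + 2 * ⟪a, b⟫ + ‖b‖ ^ 2) := by rw [norm_add_sq_real]
      _ = ‖c‖ ^ 2 * ‖a‖ ^ 2 + 2 * (‖c‖ ^ 2 * ⟪a, b⟫) + ‖c‖ ^ 2 * ‖b‖ ^ 2 := by ring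
  linarith

lemma nda_exchange_right (a b c d : A) :
    ⟪D.mul a c, D.mul b d⟫ + ⟪D.mul a d, D.mul b c⟫ = 2 * ⟪a, b⟫ * ⟪c, d⟫ := by
  have h := nda_inner_mul_right D a b (c + d)
  have hc := nda_inner_mul_right D a b c
  have hd := nda_inner_mul_right D a b d
  have ha : D.mul a (c + d) = D.mul a c + D.mul a d := map_add _ _ _
  have hb : D.mul b (c + d) = D.mul b c + D.mul b d := map_add _ _ _
  rw [ha, hb, inner_add_left, inner_add_right, inner_add_right, norm_add_sq_real] at h
  linear_combination h - hc - hd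

lemma nda_exchange_left (a b c d : A) :
    ⟪D.mul c a, D.mul d b⟫ + ⟪D.mul d a, D.mul c b⟫ = 2 * ⟪c, d⟫ * ⟪a, b⟫ := by
  have h := nda_inner_mul_left D a b (c + d)
  have hc := nda_inner_mul_left D a b c
  have hd := nda_inner_mul_left D a b d
  have ha : D.mul (c + d) a = D.mul c a + D.mul d a := by rw [map_add]; rfl
  have hb : D.mul (c + d) b = D.mul c b + D.mul d b := by rw [map_add]; rfl
  rw [ha, hb, inner_add_left, inner_add_right, inner_add_right, norm_add_sq_real] at h
  linear_combination h - hc - hd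

lemma nda_adj_right (x c y : A) :
    ⟪D.mul x (D.conj c), y⟫ = ⟪x, D.mul y c⟫ := by
  have hx : D.mul x (D.conj c) = (2 * ⟪c, D.one⟫) • x - D.mul x c := by
    rw [nda_conj_eq, map_sub, map_smul, D.mul_one]
  have hex := nda_exchange_right D x y c D.one
  rw [D.mul_one, D.mul_one] at hex
  rw [hx, inner_sub_left, real_inner_smul_left]
  linarith [real_inner_comm x y]

lemma nda_adj_left (c x y : A) :
    ⟪D.mul (D.conj c) x, y⟫ = ⟪x, D.mul c y⟫ := by
  have hx : D.mul (D.conj c) x = (2 * ⟪c, D.one⟫) • x - D.mul c x := by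
    rw [nda_conj_eq, map_sub, map_smul, LinearMap.sub_apply, LinearMap.smul_apply, D.one_mul]
  have hex := nda_exchange_left D x y c D.one
  rw [D.one_mul, D.one_mul] at hex
  rw [hx, inner_sub_left, real_inner_smul_left]
  linarith [real_inner_comm x y]

lemma nda_conj_conj (c : A) : D.conj (D.conj c) = c := by
  have h1 : ⟪D.conj c, D.one⟫ = ⟪c, D.one⟫ := by
    rw [nda_conj_eq, inner_sub_left, real_inner_smul_left, real_inner_self_eq_norm_sq,
      nda_norm_one_s7]
    ring
  rw [nda_conj_eq, h1, nda_conj_eq]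
  module

lemma nda_adj_right' (x c y : A) : ⟪D.mul x c, y⟫ = ⟪x, D.mul y (D.conj c)⟫ := by
  conv_lhs => rw [← nda_conj_conj D c]
  rw [nda_adj_right]

lemma nda_adj_left' (c x y : A) : ⟪D.mul c x, y⟫ = ⟪x, D.mul (D.conj c) y⟫ := by
  conv_lhs => rw [← nda_conj_conj D c]
  rw [nda_adj_left]

lemma nda_norm_conj_sq (c : A) : ‖D.conj c‖ ^ 2 = ‖c‖ ^ 2 := by
  rw [← real_inner_self_eq_norm_sq, ← real_inner_self_eq_norm_sq, nda_conj_eq]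
  simp only [inner_sub_left, inner_sub_right, real_inner_smul_left, real_inner_smul_right]
  have h1 : ⟪D.one, D.one⟫ = 1 := by
    rw [real_inner_self_eq_norm_sq, nda_norm_one_s7]; norm_num
  rw [h1, real_inner_comm D.one c]
  ring

end Aux

theorem nda_cancellation {A : Type*} [NormedAddCommGroup A] [InnerProductSpace ℝ A]
    (D : NormedDivisionAlgebra A) (a c : A) :
    D.mul (D.mul a c) (D.conj c) = (‖c‖ ^ 2) • a ∧
      D.mul (D.mul a (D.conj c)) c = (‖c‖ ^ 2) • a ∧
      D.mul a (D.mul (D.conj a) c) = (‖a‖ ^ 2) • c ∧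
      D.mul (D.conj a) (D.mul a c) = (‖a‖ ^ 2) • c := by
  refine ⟨?_, ?_, ?_, ?_⟩
  · apply ext_inner_right ℝ
    intro y
    rw [nda_adj_right, nda_inner_mul_right, real_inner_smul_left]
    ring
  · apply ext_inner_right ℝ
    intro y
    rw [nda_adj_right', nda_inner_mul_right, nda_norm_conj_sq, real_inner_smul_left]
    ring
  · apply ext_inner_right ℝ
    intro y
    rw [nda_adj_left', nda_inner_mul_left, nda_norm_conj_sq, real_inner_smul_left]
  · apply ext_inner_right ℝ
    intro y
    rw [nda_adj_left, nda_inner_mul_left, real_inner_smul_left]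
end

section
/- Let A be a normed division algebra. Then the multilinear expressions (a,b,c) ↦ ⟨a, [b,c]⟩ and (a,b,c,d) ↦ ⟨a, [b,c,d]⟩ are totally skew-symmetric in their arguments; in particular ⟨a, [a,b]⟩ = 0 and ⟨a, [a,b,c]⟩ = 0 for all a, b, c ∈ A. -/
open scoped RealInnerProductSpace

namespace NormedDivisionAlgebra

variable {A : Type*} [NormedAddCommGroup A] [InnerProductSpace ℝ A]
variable (D : NormedDivisionAlgebra A)

private lemma norm_one' : ‖D.one‖ = 1 := by
  have h := D.norm_mul D.one D.one
  rw [D.one_mul] at h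
  have h0 : ‖D.one‖ ≠ 0 := norm_ne_zero_iff.2 D.one_ne_zero
  have h1 : ‖D.one‖ * 1 = ‖D.one‖ * ‖D.one‖ := by linarith
  exact (mul_left_cancel₀ h0 h1).symm

private lemma inner_one_one : ⟪D.one, D.one⟫ = 1 := by
  rw [real_inner_self_eq_norm_mul_norm, D.norm_one']; ring

private lemma inner_mul_mul_left (a b c : A) :
    ⟪D.mul a b, D.mul a c⟫ = ⟪a, a⟫ * ⟪b, c⟫ := by
  have key : ∀ x y : A, ⟪x, y⟫ = (‖x + y‖ * ‖x + y‖ - ‖x‖ * ‖x‖ - ‖y‖ * ‖y‖) / 2 := fun x y =>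
    real_inner_eq_norm_add_mul_self_sub_norm_mul_self_sub_norm_mul_self_div_two x y
  have hadd : D.mul a b + D.mul a c = D.mul a (b + c) := (map_add _ _ _).symm
  rw [key (D.mul a b) (D.mul a c), hadd, D.norm_mul, D.norm_mul, D.norm_mul, key b c,
    real_inner_self_eq_norm_mul_norm]
  ring

private lemma inner_mul_mul_right (a b c : A) :
    ⟪D.mul a c, D.mul b c⟫ = ⟪a, b⟫ * ⟪c, c⟫ := by
  have key : ∀ x y : A, ⟪x, y⟫ = (‖x + y‖ * ‖x + y‖ - ‖x‖ * ‖x‖ - ‖y‖ * ‖y‖) / 2 := fun x y =>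
    real_inner_eq_norm_add_mul_self_sub_norm_mul_self_sub_norm_mul_self_div_two x y
  have hadd : D.mul a c + D.mul b c = D.mul (a + b) c := by
    rw [map_add, LinearMap.add_apply]
  rw [key (D.mul a c) (D.mul b c), hadd, D.norm_mul, D.norm_mul, D.norm_mul, key a b,
    real_inner_self_eq_norm_mul_norm]
  ring

private lemma exchange (a b c d : A) :
    ⟪D.mul a b, D.mul c d⟫ + ⟪D.mul c b, D.mul a d⟫ = 2 * ⟪a, c⟫ * ⟪b, d⟫ := by
  have h := D.inner_mul_mul_left (a + c) b d
  have e1 : D.mul (a + c) b = D.mul a b + D.mul c b := by rw [map_add, LinearMap.add_apply]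
  have e2 : D.mul (a + c) d = D.mul a d + D.mul c d := by rw [map_add, LinearMap.add_apply]
  rw [e1, e2, inner_add_left, inner_add_right, inner_add_right, inner_add_add_self,
    D.inner_mul_mul_left a b d, D.inner_mul_mul_left c b d, real_inner_comm c a] at h
  linear_combination h - 2 * (⟪b, d⟫ : ℝ) * real_inner_comm c a

/-- The conjugate used internally: `a⋆ = 2⟨a,1⟩ 1 - a`. -/
noncomputable def cj (a : A) : A := (2 * ⟪a, D.one⟫) • D.one - a

private lemma adj_left (a b c : A) : ⟪D.mul a b, c⟫ = ⟪b, D.mul (D.cj a) c⟫ := by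
  have h := D.exchange a b D.one c
  rw [D.one_mul b, D.one_mul c] at h
  have e : D.mul (D.cj a) c = (2 * ⟪a, D.one⟫) • c - D.mul a c := by
    simp only [cj, map_sub, LinearMap.sub_apply, map_smul, LinearMap.smul_apply, D.one_mul]
  rw [e, inner_sub_right, real_inner_smul_right]
  linarith

private lemma adj_right (a b c : A) : ⟪D.mul a b, c⟫ = ⟪a, D.mul c (D.cj b)⟫ := by
  have h := D.exchange a b c D.one
  rw [D.mul_one c, D.mul_one a] at h
  have e : D.mul c (D.cj b) = (2 * ⟪b, D.one⟫) • c - D.mul c b := by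
    simp only [cj, map_sub, map_smul, D.mul_one]
  rw [e, inner_sub_right, real_inner_smul_right]
  linear_combination h - real_inner_comm a (D.mul c b)

private lemma cj_cj (a : A) : D.cj (D.cj a) = a := by
  simp only [cj, inner_sub_left, real_inner_smul_left, D.inner_one_one]
  have hs : 2 * (2 * ⟪a, D.one⟫ * 1 - ⟪a, D.one⟫) = 2 * ⟪a, D.one⟫ := by ring
  rw [hs]
  abel

private lemma cj_inner_self (a : A) : ⟪D.cj a, D.cj a⟫ = ⟪a, a⟫ := by
  simp only [cj, inner_sub_left, inner_sub_right, real_inner_smul_left, real_inner_smul_right,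
    D.inner_one_one, real_inner_comm a D.one]
  ring

private lemma cj_mul_left (a b : A) : D.mul (D.cj a) (D.mul a b) = ⟪a, a⟫ • b := by
  apply ext_inner_right ℝ
  intro c
  rw [D.adj_left, D.cj_cj, D.inner_mul_mul_left, real_inner_smul_left]

private lemma mul_cj_right (a b : A) : D.mul (D.mul b a) (D.cj a) = ⟪a, a⟫ • b := by
  apply ext_inner_right ℝ
  intro c
  rw [D.adj_right, D.cj_cj, D.inner_mul_mul_right, real_inner_smul_left]
  ring

private lemma mul_self_eq (a : A) :
    D.mul a a = (2 * ⟪a, D.one⟫) • a - ⟪a, a⟫ • D.one := by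
  have h := D.mul_cj_right a D.one
  rw [D.one_mul] at h
  have e : D.mul a (D.cj a) = (2 * ⟪a, D.one⟫) • a - D.mul a a := by
    simp only [cj, map_sub, map_smul, D.mul_one]
  rw [e] at h
  rw [eq_sub_iff_add_eq, ← h]
  abel

private lemma cj_mul_left' (a b : A) : D.mul a (D.mul (D.cj a) b) = ⟪a, a⟫ • b := by
  have h := D.cj_mul_left (D.cj a) b
  rwa [D.cj_cj, D.cj_inner_self] at h

private lemma mul_cj_right' (a b : A) : D.mul (D.mul b (D.cj a)) a = ⟪a, a⟫ • b := by
  have h := D.mul_cj_right (D.cj a) b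
  rwa [D.cj_cj, D.cj_inner_self] at h

private lemma alt_left (a b : A) : D.assoc a a b = 0 := by
  have e1 : D.mul a b = (2 * ⟪a, D.one⟫) • b - D.mul (D.cj a) b := by
    simp only [cj, map_sub, LinearMap.sub_apply, map_smul, LinearMap.smul_apply, D.one_mul]
    abel
  have h1 : D.mul a (D.mul a b) = (2 * ⟪a, D.one⟫) • D.mul a b - ⟪a, a⟫ • b := by
    calc D.mul a (D.mul a b)
        = D.mul a ((2 * ⟪a, D.one⟫) • b - D.mul (D.cj a) b) := by rw [← e1]
      _ = (2 * ⟪a, D.one⟫) • D.mul a b - D.mul a (D.mul (D.cj a) b) := by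
          rw [map_sub, map_smul]
      _ = (2 * ⟪a, D.one⟫) • D.mul a b - ⟪a, a⟫ • b := by rw [D.cj_mul_left']
  have h2 : D.mul (D.mul a a) b = (2 * ⟪a, D.one⟫) • D.mul a b - ⟪a, a⟫ • b := by
    rw [D.mul_self_eq]
    simp only [map_sub, LinearMap.sub_apply, map_smul, LinearMap.smul_apply, D.one_mul]
  rw [assoc, h1, h2, sub_self]

private lemma alt_right (a b : A) : D.assoc b a a = 0 := by
  have e1 : a = (2 * ⟪a, D.one⟫) • D.one - D.cj a := by simp only [cj]; abel
  have h1 : D.mul (D.mul b a) a = (2 * ⟪a, D.one⟫) • D.mul b a - ⟪a, a⟫ • b := by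
    calc D.mul (D.mul b a) a
        = D.mul (D.mul b a) ((2 * ⟪a, D.one⟫) • D.one - D.cj a) := by rw [← e1]
      _ = (2 * ⟪a, D.one⟫) • D.mul b a - ⟪a, a⟫ • b := by
          rw [map_sub, map_smul, D.mul_one, D.mul_cj_right]
  have h2 : D.mul b (D.mul a a) = (2 * ⟪a, D.one⟫) • D.mul b a - ⟪a, a⟫ • b := by
    rw [D.mul_self_eq, map_sub, map_smul, map_smul, D.mul_one]
  rw [assoc, h1, h2, sub_self]

private lemma inner_assoc_self (a b c : A) : ⟪a, D.assoc a b c⟫ = 0 := by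
  have h1 : ⟪a, D.mul (D.mul a b) c⟫ = ⟪a, a⟫ * ⟪b, D.cj c⟫ := by
    rw [real_inner_comm, D.adj_right, D.inner_mul_mul_left]
  have h2 : ⟪a, D.mul a (D.mul b c)⟫ = ⟪a, a⟫ * ⟪D.one, D.mul b c⟫ := by
    have h2' := D.inner_mul_mul_left a D.one (D.mul b c)
    rwa [D.mul_one] at h2'
  have h3 : ⟪D.one, D.mul b c⟫ = ⟪b, D.cj c⟫ := by
    rw [real_inner_comm, D.adj_right, D.one_mul]
  rw [assoc, inner_sub_right, h1, h2, h3, sub_self]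

private lemma inner_comm_self (a b : A) : ⟪a, D.comm a b⟫ = 0 := by
  have h1 : ⟪a, D.mul a b⟫ = ⟪a, a⟫ * ⟪D.one, b⟫ := by
    have h1' := D.inner_mul_mul_left a D.one b
    rwa [D.mul_one] at h1'
  have h2 : ⟪a, D.mul b a⟫ = ⟪b, D.one⟫ * ⟪a, a⟫ := by
    have h2' := D.inner_mul_mul_right b D.one a
    rw [D.one_mul] at h2'
    rw [real_inner_comm, h2']
  rw [comm, inner_sub_right, h1, h2, real_inner_comm D.one b]
  ring

private lemma comm_add_left (a b c : A) :
    D.comm (a + b) c = D.comm a c + D.comm b c := by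
  simp only [comm, map_add, LinearMap.add_apply]
  abel

private lemma assoc_add1 (a b c d : A) :
    D.assoc (a + b) c d = D.assoc a c d + D.assoc b c d := by
  simp only [assoc, map_add, LinearMap.add_apply]
  abel

private lemma assoc_add2 (a b c d : A) :
    D.assoc a (b + c) d = D.assoc a b d + D.assoc a c d := by
  simp only [assoc, map_add, LinearMap.add_apply]
  abel

private lemma assoc_add3 (a b c d : A) :
    D.assoc a b (c + d) = D.assoc a b c + D.assoc a b d := by
  simp only [assoc, map_add, LinearMap.add_apply]
  abel

private lemma assoc_swap12 (a b c : A) : D.assoc a b c = - D.assoc b a c := by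
  have h := D.alt_left (a + b) c
  rw [assoc_add1, assoc_add2, assoc_add2, D.alt_left, D.alt_left] at h
  simp only [zero_add, add_zero] at h
  exact eq_neg_of_add_eq_zero_left h

private lemma assoc_swap23 (a b c : A) : D.assoc a b c = - D.assoc a c b := by
  have h := D.alt_right (b + c) a
  rw [assoc_add2, assoc_add3, assoc_add3, D.alt_right, D.alt_right] at h
  simp only [zero_add, add_zero] at h
  exact eq_neg_of_add_eq_zero_left h

end NormedDivisionAlgebra

theorem nda_inner_comm_assoc_skew {A : Type*} [NormedAddCommGroup A] [InnerProductSpace ℝ A]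
    (D : NormedDivisionAlgebra A) :
    (∀ a b : A, ⟪a, D.comm a b⟫ = 0) ∧
      (∀ a b c : A, ⟪a, D.assoc a b c⟫ = 0) ∧
      (∀ a b c : A, ⟪a, D.comm b c⟫ = - ⟪b, D.comm a c⟫) ∧
      (∀ a b c : A, ⟪a, D.comm b c⟫ = - ⟪a, D.comm c b⟫) ∧
      (∀ a b c d : A, ⟪a, D.assoc b c d⟫ = - ⟪b, D.assoc a c d⟫) ∧
      (∀ a b c d : A, ⟪a, D.assoc b c d⟫ = - ⟪a, D.assoc c b d⟫) ∧
      (∀ a b c d : A, ⟪a, D.assoc b c d⟫ = - ⟪a, D.assoc b d c⟫) := by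
  refine ⟨D.inner_comm_self, D.inner_assoc_self, ?_, ?_, ?_, ?_, ?_⟩
  · intro a b c
    have h := D.inner_comm_self (a + b) c
    rw [D.comm_add_left, inner_add_left, inner_add_right, inner_add_right,
      D.inner_comm_self, D.inner_comm_self] at h
    linarith
  · intro a b c
    have e : D.comm b c = - D.comm c b := by simp only [NormedDivisionAlgebra.comm, neg_sub]
    rw [e, inner_neg_right]
  · intro a b c d
    have h := D.inner_assoc_self (a + b) c d
    rw [D.assoc_add1, inner_add_left, inner_add_right, inner_add_right,
      D.inner_assoc_self, D.inner_assoc_self] at h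
    linarith
  · intro a b c d
    rw [D.assoc_swap12 b c d, inner_neg_right]
  · intro a b c d
    rw [D.assoc_swap23 b c d, inner_neg_right]
end
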